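/- Let f ∈ K(x₁,…,xₙ) be non-constant. Two uni-multivariate decompositions (g,h) and (g',h') of f (so f = g(h) = g'(h') with g,g' ∈ K(y), h,h' ∈ K(x₁,…,xₙ)) generate the same intermediate field, K(h) = K(h'), if and only if there exists a rational function l ∈ K(y) of degree 1 (a composition unit) with h = l(h'). -/

import Mathlib

open MvPolynomial

/-- Substitution of an element `a` of a field extension of `K` into a univariate
rational function `g ∈ K(t)` (the composition `g ∘ a`). -/
noncomputable def ratEval {K : Type*} [Field K] {L : Type*} [Field L] [Algebra K L]
    (g : RatFunc K) (a : L) : L :=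
  Polynomial.aeval a g.num / Polynomial.aeval a g.denom

section Aux

variable {K : Type*} [Field K] {L : Type*} [Field L] [Algebra K L]
  {L' : Type*} [Field L'] [Algebra K L']

theorem ratEval_algHom (ψ : L →ₐ[K] L') (g : RatFunc K) (a : L) :
    ψ (ratEval g a) = ratEval g (ψ a) := by
  simp only [ratEval, map_div₀, Polynomial.aeval_algHom_apply]

/-- The lift of `Polynomial.aeval t` to `RatFunc K` for a transcendental `t`. -/
noncomputable def liftAt (t : L) (ht : Transcendental K t) : RatFunc K →ₐ[K] L :=
  RatFunc.liftAlgHom (Polynomial.aeval t) (fun x hx => by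
    have hinj := transcendental_iff_injective.mp ht
    refine Submonoid.mem_comap.mpr (mem_nonZeroDivisors_of_ne_zero (fun h0 => ?_))
    exact mem_nonZeroDivisors_iff_ne_zero.mp hx (hinj (by simpa using h0)))

theorem liftAt_apply (t : L) (ht : Transcendental K t) (g : RatFunc K) :
    liftAt t ht g = ratEval g t :=
  RatFunc.liftAlgHom_apply _ _ g

theorem liftAt_injective (t : L) (ht : Transcendental K t) :
    Function.Injective (liftAt t ht) :=
  (liftAt t ht).toRingHom.injective

theorem ratEval_div_eq (t : L) (ht : Transcendental K t) (r s : Polynomial K) :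
    ratEval (algebraMap (Polynomial K) (RatFunc K) r / algebraMap (Polynomial K) (RatFunc K) s) t
      = Polynomial.aeval t r / Polynomial.aeval t s := by
  rw [← liftAt_apply t ht]
  exact RatFunc.liftAlgHom_apply_div _ _ r s

theorem ratEval_X_eq (t : L) : ratEval (RatFunc.X (K := K)) t = t := by
  simp [ratEval, RatFunc.num_X, RatFunc.denom_X]

theorem ratEval_comp (t : L) (ht : Transcendental K t) (g r : RatFunc K) :
    ratEval (ratEval g r) t = ratEval g (ratEval r t) := by
  have h := ratEval_algHom (liftAt t ht) g r
  rwa [liftAt_apply, liftAt_apply] at h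

/-- A non-constant element of `RatFunc K` is transcendental over `K`. -/
theorem transcendental_of_not_mem_range_ratFunc {x : RatFunc K}
    (hx : x ∉ Set.range (algebraMap K (RatFunc K))) : Transcendental K x := by
  intro halg
  obtain ⟨p, hp⟩ := IsIntegrallyClosed.isIntegral_iff.mp
    (halg.isIntegral.tower_top (A := Polynomial K))
  have halgp : IsAlgebraic K p := by
    rwa [← isAlgebraic_algebraMap_iff (A := RatFunc K)
      (IsFractionRing.injective (Polynomial K) (RatFunc K)), hp]
  rcases eq_or_ne p.natDegree 0 with hd | hd
  · obtain ⟨a, ha⟩ := Polynomial.natDegree_eq_zero.mp hd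
    exact hx ⟨a, by rw [RatFunc.algebraMap_eq_C, ← RatFunc.algebraMap_C, ha, hp]⟩
  · have hp0 : p ≠ 0 := fun h => hd (by simp [h])
    exact Polynomial.transcendental p hd
      (mem_nonZeroDivisors_of_ne_zero (Polynomial.leadingCoeff_ne_zero.mpr hp0)) halgp

end Aux

/-- An `MvPolynomial` algebraic over the base field is a constant. -/
theorem eq_C_of_isAlgebraic {K : Type*} [Field K] :
    ∀ {n : ℕ} (p : MvPolynomial (Fin n) K), IsAlgebraic K p → ∃ c : K, MvPolynomial.C c = p := by
  intro n
  induction n with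
  | zero => exact fun p _ => MvPolynomial.C_surjective (Fin 0) p
  | succ n ih =>
    intro p hp
    set e := MvPolynomial.finSuccEquiv K n with he
    have hq : IsAlgebraic K (e p) := hp.algHom (e : MvPolynomial (Fin (n+1)) K →ₐ[K] Polynomial (MvPolynomial (Fin n) K))
    have hd : (e p).natDegree = 0 := by
      by_contra hd
      have h0 : (e p) ≠ 0 := fun h => hd (by simp [h])
      have htr : Transcendental (MvPolynomial (Fin n) K) (e p) :=
        Polynomial.transcendental _ hd
          (mem_nonZeroDivisors_of_ne_zero (Polynomial.leadingCoeff_ne_zero.mpr h0))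
      exact htr (hq.isIntegral.tower_top (A := MvPolynomial (Fin n) K)).isAlgebraic
    obtain ⟨b, hb⟩ := Polynomial.natDegree_eq_zero.mp hd
    have hbalg : IsAlgebraic K b := by
      have h1 : IsAlgebraic K (Polynomial.C b) := hb ▸ hq
      rwa [← Polynomial.algebraMap_eq,
        isAlgebraic_algebraMap_iff
          (by rw [Polynomial.algebraMap_eq]; exact Polynomial.C_injective)] at h1
    obtain ⟨c, hc⟩ := ih b hbalg
    refine ⟨c, e.injective ?_⟩
    have h2 : e (MvPolynomial.C c) = algebraMap K _ c := by
      rw [show (MvPolynomial.C c : MvPolynomial (Fin (n+1)) K) = algebraMap K _ c from rfl]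
      exact e.commutes c
    rw [h2, ← hb, ← hc, Polynomial.algebraMap_apply]
    rfl

set_option synthInstance.maxHeartbeats 1000000 in
set_option maxHeartbeats 1000000 in
/-- A non-constant element of a rational function field is transcendental over `K`. -/
theorem transcendental_of_not_mem_range_frac {K : Type*} [Field K] {n : ℕ}
    {x : FractionRing (MvPolynomial (Fin n) K)}
    (hx : x ∉ Set.range (algebraMap K (FractionRing (MvPolynomial (Fin n) K)))) :
    Transcendental K x := by
  intro halg
  obtain ⟨p, hp⟩ := IsIntegrallyClosed.isIntegral_iff.mp
    (halg.isIntegral.tower_top (A := MvPolynomial (Fin n) K))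
  have halgp : IsAlgebraic K p := by
    rwa [← isAlgebraic_algebraMap_iff (A := FractionRing (MvPolynomial (Fin n) K))
      (IsFractionRing.injective (MvPolynomial (Fin n) K) _), hp]
  obtain ⟨c, hc⟩ := eq_C_of_isAlgebraic p halgp
  refine hx ⟨c, ?_⟩
  rw [IsScalarTower.algebraMap_apply K (MvPolynomial (Fin n) K)
      (FractionRing (MvPolynomial (Fin n) K)),
    show algebraMap K (MvPolynomial (Fin n) K) c = MvPolynomial.C c from rfl, hc, hp]

/-- The key degree lemma: if `l` has a compositional left inverse, then `l` is a Möbius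
transformation. -/
theorem maxdeg_eq_one_of_comp_inv {K : Type*} [Field K] (l w : RatFunc K)
    (hE : ratEval w l = RatFunc.X) :
    max l.num.natDegree l.denom.natDegree = 1 := by
  classical
  have hlK : l ∉ Set.range (algebraMap K (RatFunc K)) := by
    rintro ⟨k, rfl⟩
    have h2 : (RatFunc.X : RatFunc K) ∈ Set.range (algebraMap K (RatFunc K)) := by
      rw [← hE, ratEval, Polynomial.aeval_algebraMap_apply, Polynomial.aeval_algebraMap_apply,
        ← map_div₀]
      exact Set.mem_range_self _
    obtain ⟨s, hs⟩ := h2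
    have := congrArg RatFunc.num hs
    rw [RatFunc.algebraMap_eq_C, RatFunc.num_C, RatFunc.num_X] at this
    exact Polynomial.X_ne_C s this.symm
  have htl : Transcendental K l := transcendental_of_not_mem_range_ratFunc hlK
  set p := l.num with hp
  set q := l.denom with hqdef
  have hq : q ≠ 0 := l.denom_ne_zero
  have hcop : IsCoprime p q := l.isCoprime_num_denom
  set u := w.num with hu'
  set v := w.denom with hv'
  have hv : v ≠ 0 := w.denom_ne_zero
  have hcopw : IsCoprime u v := w.isCoprime_num_denom
  have hu : u ≠ 0 := by
    intro h0
    rw [ratEval, ← hu', ← hv', h0] at hE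
    simp only [map_zero, zero_div] at hE
    exact RatFunc.X_ne_zero hE.symm
  set N := max u.natDegree v.natDegree with hN
  set Q := algebraMap (Polynomial K) (RatFunc K) q with hQdef
  have hQ : Q ≠ 0 := RatFunc.algebraMap_ne_zero hq
  have hlPQ : l = algebraMap (Polynomial K) (RatFunc K) p / Q := (RatFunc.num_div_denom l).symm
  have claim1 : ∀ pol : Polynomial K, pol.natDegree ≤ N →
      Polynomial.aeval l pol = algebraMap (Polynomial K) (RatFunc K)
        (∑ i ∈ Finset.range (N+1), Polynomial.C (pol.coeff i) * p ^ i * q ^ (N - i)) / Q ^ N := by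
    intro pol hpol
    rw [Polynomial.aeval_eq_sum_range' (Nat.lt_succ_of_le hpol), map_sum, Finset.sum_div]
    refine Finset.sum_congr rfl fun i hi => ?_
    rw [Finset.mem_range, Nat.lt_succ_iff] at hi
    rw [map_mul, map_mul, map_pow, map_pow, hlPQ, Algebra.smul_def, div_pow]
    have hQN : Q ^ N = Q ^ (N - i) * Q ^ i := by rw [← pow_add, Nat.sub_add_cancel hi]
    rw [hQN]
    simp only [RatFunc.algebraMap_C, RatFunc.algebraMap_eq_C]
    field_simp
    ring
  set A := ∑ i ∈ Finset.range (N+1), Polynomial.C (u.coeff i) * p ^ i * q ^ (N - i) with hA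
  set B := ∑ i ∈ Finset.range (N+1), Polynomial.C (v.coeff i) * p ^ i * q ^ (N - i) with hB
  have hE2 : algebraMap (Polynomial K) (RatFunc K) A / algebraMap (Polynomial K) (RatFunc K) B = RatFunc.X := by
    rw [← hE, ratEval, ← hu', ← hv', claim1 u (le_max_left _ _), claim1 v (le_max_right _ _),
      div_div_div_cancel_right₀ (pow_ne_zero N hQ)]
  have hBne : algebraMap (Polynomial K) (RatFunc K) B ≠ 0 := by
    intro h0
    rw [h0, div_zero] at hE2
    exact RatFunc.X_ne_zero hE2.symm
  have hAB : A = Polynomial.X * B := by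
    apply IsFractionRing.injective (Polynomial K) (RatFunc K)
    rw [map_mul, RatFunc.algebraMap_X, ← hE2, div_mul_cancel₀ _ hBne]
  have hcoefN : u.coeff N ≠ 0 ∨ v.coeff N ≠ 0 := by
    rcases le_total u.natDegree v.natDegree with hle | hle
    · right
      rw [hN, max_eq_right hle]
      exact Polynomial.leadingCoeff_ne_zero.mpr hv
    · left
      rw [hN, max_eq_left hle]
      exact Polynomial.leadingCoeff_ne_zero.mpr hu
  have hcoef0 : u.coeff 0 ≠ 0 ∨ v.coeff 0 ≠ 0 := by
    by_contra hcon
    push_neg at hcon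
    exact Polynomial.not_isUnit_X (hcopw.isUnit_of_dvd'
      (Polynomial.X_dvd_iff.mpr hcon.1) (Polynomial.X_dvd_iff.mpr hcon.2))
  have hlin : ∀ x y : K, (x ≠ 0 ∨ y ≠ 0) →
      Polynomial.C y * Polynomial.X - Polynomial.C x ≠ 0 := by
    intro x y hxy h0
    have h2 := congrArg (fun r => Polynomial.coeff r 0) h0
    have h1 := congrArg (fun r => Polynomial.coeff r 1) h0
    simp at h1 h2
    exact hxy.elim (fun hx => hx h2) (fun hy => hy h1)
  have hlindeg : ∀ x y : K, (Polynomial.C y * Polynomial.X - Polynomial.C x).natDegree ≤ 1 := by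
    intro x y
    refine le_trans (Polynomial.natDegree_sub_le _ _) (max_le ?_ ?_)
    · exact le_trans (Polynomial.natDegree_mul_le) (by simp)
    · simp
  -- q-divisibility
  have dq1 : ∀ (z : Polynomial K),
      q ∣ (∑ i ∈ Finset.range (N+1), Polynomial.C (z.coeff i) * p ^ i * q ^ (N - i))
        - Polynomial.C (z.coeff N) * p ^ N := by
    intro z
    rw [Finset.sum_range_succ, Nat.sub_self, pow_zero, mul_one, add_sub_cancel_right]
    exact Finset.dvd_sum fun i hi =>
      (dvd_pow_self q (Nat.sub_ne_zero_of_lt (Finset.mem_range.mp hi))).mul_left _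
  have keyq : q ∣ (Polynomial.C (v.coeff N) * Polynomial.X - Polynomial.C (u.coeff N)) * p ^ N := by
    have heq : (A - Polynomial.C (u.coeff N) * p ^ N)
        - Polynomial.X * (B - Polynomial.C (v.coeff N) * p ^ N)
        = (Polynomial.C (v.coeff N) * Polynomial.X - Polynomial.C (u.coeff N)) * p ^ N := by
      rw [hAB]; ring
    rw [← heq]
    exact dvd_sub (dq1 u) ((dq1 v).mul_left _)
  have hqdeg : q.natDegree ≤ 1 := by
    have hdvd : q ∣ Polynomial.C (v.coeff N) * Polynomial.X - Polynomial.C (u.coeff N) :=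
      (hcop.symm.pow_right (n := N)).dvd_of_dvd_mul_right keyq
    exact le_trans (Polynomial.natDegree_le_of_dvd hdvd (hlin _ _ hcoefN)) (hlindeg _ _)
  -- p-divisibility
  have dp1 : ∀ (z : Polynomial K),
      p ∣ (∑ i ∈ Finset.range (N+1), Polynomial.C (z.coeff i) * p ^ i * q ^ (N - i))
        - Polynomial.C (z.coeff 0) * q ^ N := by
    intro z
    rw [Finset.sum_range_succ', pow_zero, mul_one, Nat.sub_zero, add_sub_cancel_right]
    exact Finset.dvd_sum fun i _ =>
      ((dvd_pow_self p (Nat.succ_ne_zero i)).mul_left _).mul_right _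
  have keyp : p ∣ (Polynomial.C (v.coeff 0) * Polynomial.X - Polynomial.C (u.coeff 0)) * q ^ N := by
    have heq : (A - Polynomial.C (u.coeff 0) * q ^ N)
        - Polynomial.X * (B - Polynomial.C (v.coeff 0) * q ^ N)
        = (Polynomial.C (v.coeff 0) * Polynomial.X - Polynomial.C (u.coeff 0)) * q ^ N := by
      rw [hAB]; ring
    rw [← heq]
    exact dvd_sub (dp1 u) ((dp1 v).mul_left _)
  have hpdeg : p.natDegree ≤ 1 := by
    have hdvd : p ∣ Polynomial.C (v.coeff 0) * Polynomial.X - Polynomial.C (u.coeff 0) :=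
      (hcop.pow_right (n := N)).dvd_of_dvd_mul_right keyp
    exact le_trans (Polynomial.natDegree_le_of_dvd hdvd (hlin _ _ hcoef0)) (hlindeg _ _)
  -- lower bound
  have hge : 1 ≤ max p.natDegree q.natDegree := by
    by_contra hcon
    push_neg at hcon
    have hp0 : p.natDegree = 0 :=
      Nat.lt_one_iff.mp (lt_of_le_of_lt (le_max_left _ _) hcon)
    have hq0 : q.natDegree = 0 :=
      Nat.lt_one_iff.mp (lt_of_le_of_lt (le_max_right _ _) hcon)
    have hq1 : q = 1 := (l.monic_denom.natDegree_eq_zero).mp hq0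
    obtain ⟨a, ha⟩ := Polynomial.natDegree_eq_zero.mp hp0
    refine hlK ⟨a, ?_⟩
    rw [← RatFunc.num_div_denom l, ← hp, ← hqdef, hq1, ← ha]
    simp [RatFunc.algebraMap_C, RatFunc.algebraMap_eq_C]
  exact le_antisymm (max_le hpdeg hqdeg) hge

/-- Two uni-multivariate decompositions `(g,h)` and `(g',h')` of a
non-constant `f ∈ K(x₁,…,xₙ)` generate the same intermediate field, `K(h) = K(h')`,
iff there is a degree-1 rational function `l ∈ K(y)` (a composition unit) with
`h = l(h')`. -/
theorem same_intermediate_field_iff_equivalent_decompositions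
    {K : Type*} [Field K] {n : ℕ}
    (f h h' : FractionRing (MvPolynomial (Fin n) K))
    (hf : f ∉ Set.range (algebraMap K (FractionRing (MvPolynomial (Fin n) K))))
    (g g' : RatFunc K)
    (hdec : f = ratEval g h) (hdec' : f = ratEval g' h') :
    IntermediateField.adjoin K {h} = IntermediateField.adjoin K {h'} ↔
      ∃ l : RatFunc K, max l.num.natDegree l.denom.natDegree = 1 ∧ h = ratEval l h' := by
  have hh : h ∉ Set.range (algebraMap K (FractionRing (MvPolynomial (Fin n) K))) := by
    rintro ⟨k, rfl⟩
    refine hf ?_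
    rw [hdec, ratEval, Polynomial.aeval_algebraMap_apply, Polynomial.aeval_algebraMap_apply,
      ← map_div₀]
    exact Set.mem_range_self _
  have hh' : h' ∉ Set.range (algebraMap K (FractionRing (MvPolynomial (Fin n) K))) := by
    rintro ⟨k, rfl⟩
    refine hf ?_
    rw [hdec', ratEval, Polynomial.aeval_algebraMap_apply, Polynomial.aeval_algebraMap_apply,
      ← map_div₀]
    exact Set.mem_range_self _
  have hth : Transcendental K h := transcendental_of_not_mem_range_frac hh
  have hth' : Transcendental K h' := transcendental_of_not_mem_range_frac hh'
  constructor
  · intro heq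
    have hmem : h ∈ IntermediateField.adjoin K {h'} :=
      heq ▸ IntermediateField.mem_adjoin_simple_self K h
    obtain ⟨r, s, hrs⟩ := (IntermediateField.mem_adjoin_simple_iff K h).mp hmem
    have hmem' : h' ∈ IntermediateField.adjoin K {h} :=
      heq.symm ▸ IntermediateField.mem_adjoin_simple_self K h'
    obtain ⟨r', s', hrs'⟩ := (IntermediateField.mem_adjoin_simple_iff K h').mp hmem'
    set l : RatFunc K := algebraMap (Polynomial K) _ r / algebraMap (Polynomial K) _ s with hl
    have hlh : h = ratEval l h' := by rw [hrs, hl, ratEval_div_eq h' hth']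
    set m : RatFunc K := algebraMap (Polynomial K) _ r' / algebraMap (Polynomial K) _ s' with hm
    have hmh : h' = ratEval m h := by rw [hrs', hm, ratEval_div_eq h hth]
    have hcomp : ratEval (ratEval m l : RatFunc K) h' = h' := by
      rw [ratEval_comp h' hth', ← hlh, ← hmh]
    have hMX : ratEval m l = RatFunc.X := by
      apply liftAt_injective h' hth'
      rw [liftAt_apply, liftAt_apply, hcomp, ratEval_X_eq]
    exact ⟨l, maxdeg_eq_one_of_comp_inv l m hMX, hlh⟩
  · rintro ⟨l, hdeg, hlh⟩
    have m1 : h ∈ IntermediateField.adjoin K {h'} :=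
      (IntermediateField.mem_adjoin_simple_iff K h).mpr ⟨l.num, l.denom, hlh⟩
    set a := l.num.coeff 1 with ha'
    set b := l.num.coeff 0 with hb'
    set c := l.denom.coeff 1 with hc'
    set d := l.denom.coeff 0 with hd'
    have hnumdeg : l.num.natDegree ≤ 1 := le_trans (le_max_left _ _) hdeg.le
    have hdendeg : l.denom.natDegree ≤ 1 := le_trans (le_max_right _ _) hdeg.le
    have hnum : l.num = Polynomial.C a * Polynomial.X + Polynomial.C b :=
      Polynomial.eq_X_add_C_of_natDegree_le_one hnumdeg
    have hden : l.denom = Polynomial.C c * Polynomial.X + Polynomial.C d :=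
      Polynomial.eq_X_add_C_of_natDegree_le_one hdendeg
    have hdenval : Polynomial.aeval h' l.denom ≠ 0 := by
      intro h0
      exact l.denom_ne_zero ((transcendental_iff_injective.mp hth') (by simpa using h0))
    have key : h * (algebraMap K _ c * h' + algebraMap K _ d)
        = algebraMap K _ a * h' + algebraMap K _ b := by
      have h1 : ratEval l h' * Polynomial.aeval h' l.denom = Polynomial.aeval h' l.num := by
        rw [ratEval, div_mul_cancel₀ _ hdenval]
      rw [hnum, hden] at h1
      simp only [map_add, map_mul, Polynomial.aeval_X, Polynomial.aeval_C] at h1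
      rw [hlh]
      exact h1
    have hca : algebraMap K _ c * h - algebraMap K _ a ≠ 0 := by
      intro h0
      rcases eq_or_ne c 0 with hc0 | hc0
      · have ha0 : a = 0 := by
          have := h0
          rw [hc0, map_zero, zero_mul, zero_sub, neg_eq_zero] at this
          exact (map_eq_zero (algebraMap K _)).mp this
        have e1 : l.num.natDegree = 0 := by rw [hnum, ha0]; simp
        have e2 : l.denom.natDegree = 0 := by rw [hden, hc0]; simp
        rw [e1, e2] at hdeg
        simp at hdeg
      · refine hh ⟨a / c, ?_⟩
        rw [map_div₀, div_eq_iff ((map_ne_zero (algebraMap K _)).mpr hc0)]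
        rw [sub_eq_zero] at h0
        rw [← h0]; ring
    have m2 : h' ∈ IntermediateField.adjoin K {h} := by
      refine (IntermediateField.mem_adjoin_simple_iff K h').mpr
        ⟨Polynomial.C b - Polynomial.C d * Polynomial.X,
         Polynomial.C c * Polynomial.X - Polynomial.C a, ?_⟩
      simp only [map_sub, map_mul, Polynomial.aeval_X, Polynomial.aeval_C]
      rw [eq_div_iff hca]
      linear_combination key
    exact le_antisymm
      (IntermediateField.adjoin_le_iff.mpr (Set.singleton_subset_iff.mpr m1))
      (IntermediateField.adjoin_le_iff.mpr (Set.singleton_subset_iff.mpr m2))
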